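/- Let A and B be self-adjoint n×n complex matrices with A ≥ 0 and Ker(A) ⊆ Ker(B). If λ₁ denotes the smallest positive eigenvalue of A, then -(‖B‖/λ₁)·A ≤ B ≤ (‖B‖/λ₁)·A in the Loewner order. -/

import Mathlib

open Matrix
open scoped ComplexOrder

set_option maxHeartbeats 1000000 in
/-- Let `A` and `B` be self-adjoint `n × n` complex matrices with `A ≥ 0`
(positive semidefinite) and `Ker A ⊆ Ker B`.  If `λ₁` is the smallest positive eigenvalue
of `A`, then `-(‖B‖/λ₁) • A ≤ B ≤ (‖B‖/λ₁) • A` in the Loewner order. -/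
theorem stmt0 (n : ℕ) (A B : Matrix (Fin n) (Fin n) ℂ)
    (hA : A.PosSemidef) (hB : B.IsHermitian)
    (hker : ∀ v : Fin n → ℂ, A.mulVec v = 0 → B.mulVec v = 0)
    (lam1 : ℝ)
    (hlam : IsLeast {μ : ℝ | 0 < μ ∧ ∃ v : Fin n → ℂ, v ≠ 0 ∧ A.mulVec v = (μ : ℂ) • v} lam1) :
    (B + ((‖Matrix.toEuclideanCLM (𝕜 := ℂ) B‖ / lam1 : ℝ) : ℂ) • A).PosSemidef ∧
    (((‖Matrix.toEuclideanCLM (𝕜 := ℂ) B‖ / lam1 : ℝ) : ℂ) • A - B).PosSemidef := by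
  classical
  obtain ⟨⟨hl0, -⟩, hlb⟩ := hlam
  set N : ℝ := ‖Matrix.toEuclideanCLM (𝕜 := ℂ) B‖ with hN
  set c : ℝ := N / lam1 with hc
  have hAsym : (Matrix.toEuclideanLin A).IsSymmetric :=
    (Matrix.isHermitian_iff_isSymmetric).1 hA.1
  have hBsym : (Matrix.toEuclideanLin B).IsSymmetric :=
    (Matrix.isHermitian_iff_isSymmetric).1 hB
  -- key inequality
  have key : ∀ v : EuclideanSpace ℂ (Fin n),
      ‖(inner ℂ v (Matrix.toEuclideanLin B v) : ℂ)‖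
        ≤ c * (inner ℂ v (Matrix.toEuclideanLin A v) : ℂ).re := by
    intro v
    set b := hA.1.eigenvectorBasis with hbdef
    set μ := hA.1.eigenvalues with hμdef
    have hb : ∀ i, Matrix.toEuclideanLin A (b i) = (μ i : ℂ) • b i := by
      intro i
      have h1 : A *ᵥ ⇑(b i) = (μ i : ℂ) • ⇑(b i) := by
        rw [hA.1.mulVec_eigenvectorBasis i]
        ext j
        simp [Complex.real_smul]
        rfl
      have h2 : Matrix.toEuclideanLin A (b i)
          = (WithLp.equiv 2 (Fin n → ℂ)).symm (A *ᵥ ⇑(b i)) := rfl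
      rw [h2, h1]
      rfl
    set r : Fin n → ℂ := fun i => b.repr v i with hr
    set s : Finset (Fin n) := Finset.univ.filter (fun i => ¬ μ i = 0) with hs
    set s₀ : Finset (Fin n) := Finset.univ.filter (fun i => μ i = 0) with hs₀
    set v₁ : EuclideanSpace ℂ (Fin n) := ∑ i ∈ s, r i • b i with hv₁
    set v₀ : EuclideanSpace ℂ (Fin n) := ∑ i ∈ s₀, r i • b i with hv₀
    have hv : v = v₀ + v₁ := by
      rw [hv₀, hv₁, hs, hs₀, Finset.sum_filter_add_sum_filter_not]
      exact (b.sum_repr v).symm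
    have hAv₀ : Matrix.toEuclideanLin A v₀ = 0 := by
      rw [hv₀, map_sum]
      refine Finset.sum_eq_zero fun i hi => ?_
      have : μ i = 0 := by simpa [hs₀] using hi
      rw [_root_.map_smul, hb i, this]
      simp
    have hBv₀ : Matrix.toEuclideanLin B v₀ = 0 := by
      have h1 : A *ᵥ ((WithLp.equiv 2 (Fin n → ℂ)) v₀) = 0 := by
        have := congrArg (WithLp.equiv 2 (Fin n → ℂ)) hAv₀
        simpa using this
      have h2 := hker _ h1
      apply (WithLp.equiv 2 (Fin n → ℂ)).injective
      simpa using h2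
    have hAv₁ : Matrix.toEuclideanLin A v₁ = ∑ i ∈ s, ((μ i : ℂ) * r i) • b i := by
      rw [hv₁, map_sum]
      refine Finset.sum_congr rfl fun i _ => ?_
      rw [_root_.map_smul, hb i, smul_smul, mul_comm]
    have hAv : Matrix.toEuclideanLin A v = Matrix.toEuclideanLin A v₁ := by
      rw [hv, map_add, hAv₀, zero_add]
    have hBv : Matrix.toEuclideanLin B v = Matrix.toEuclideanLin B v₁ := by
      rw [hv, map_add, hBv₀, zero_add]
    -- inner products reduce to v₁
    have hinnerA : (inner ℂ v (Matrix.toEuclideanLin A v) : ℂ)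
        = inner ℂ v₁ (Matrix.toEuclideanLin A v₁) := by
      rw [hAv, hv, inner_add_left]
      have h0 : (inner ℂ v₀ (Matrix.toEuclideanLin A v₁) : ℂ) = 0 := by
        rw [← hAsym v₀ v₁, hAv₀, inner_zero_left]
      rw [h0, zero_add]
    have hinnerB : (inner ℂ v (Matrix.toEuclideanLin B v) : ℂ)
        = inner ℂ v₁ (Matrix.toEuclideanLin B v₁) := by
      rw [hBv, hv, inner_add_left]
      have h0 : (inner ℂ v₀ (Matrix.toEuclideanLin B v₁) : ℂ) = 0 := by
        rw [← hBsym v₀ v₁, hBv₀, inner_zero_left]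
      rw [h0, zero_add]
    -- compute ⟪v₁, A v₁⟫
    have hsumA : (inner ℂ v₁ (Matrix.toEuclideanLin A v₁) : ℂ)
        = ∑ i ∈ s, (μ i : ℂ) * (starRingEnd ℂ (r i) * r i) := by
      rw [hv₁, hAv₁, b.orthonormal.inner_sum]
      refine Finset.sum_congr rfl fun i _ => ?_
      ring
    have hreA : (inner ℂ v₁ (Matrix.toEuclideanLin A v₁) : ℂ).re
        = ∑ i ∈ s, μ i * ‖r i‖ ^ 2 := by
      rw [hsumA, Complex.re_sum]
      refine Finset.sum_congr rfl fun i _ => ?_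
      rw [Complex.conj_mul']
      rw [show ((μ i : ℂ) * (‖r i‖ : ℂ) ^ 2) = ((μ i * ‖r i‖ ^ 2 : ℝ) : ℂ) by push_cast; ring]
      exact Complex.ofReal_re _
    -- ‖v₁‖²
    have hnorm : ‖v₁‖ ^ 2 = ∑ i ∈ s, ‖r i‖ ^ 2 := by
      have h1 : (inner ℂ v₁ v₁ : ℂ) = ∑ i ∈ s, starRingEnd ℂ (r i) * r i := by
        rw [hv₁, b.orthonormal.inner_sum]
      have h2 := inner_self_eq_norm_sq (𝕜 := ℂ) v₁
      rw [h1] at h2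
      rw [← h2, map_sum]
      refine Finset.sum_congr rfl fun i _ => ?_
      rw [Complex.conj_mul']
      norm_cast
    -- each positive eigenvalue is ≥ lam1
    have hμge : ∀ i ∈ s, lam1 ≤ μ i := by
      intro i hi
      have hne : μ i ≠ 0 := by simpa [hs] using hi
      have hpos : 0 < μ i := lt_of_le_of_ne (hA.eigenvalues_nonneg i) (Ne.symm hne)
      refine hlb ⟨hpos, ⇑(b i), ?_, ?_⟩
      · have := b.orthonormal.ne_zero i
        intro h
        apply this
        exact (WithLp.equiv 2 (Fin n → ℂ)).injective (by simpa using h)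
      · have := hA.1.mulVec_eigenvectorBasis i
        rw [this]
        ext j
        simp [RCLike.real_smul_eq_coe_smul (K := ℂ)]
        rfl
    have hlower : lam1 * ‖v₁‖ ^ 2 ≤ (inner ℂ v (Matrix.toEuclideanLin A v) : ℂ).re := by
      rw [hinnerA, hreA, hnorm, Finset.mul_sum]
      refine Finset.sum_le_sum fun i hi => ?_
      have := hμge i hi
      nlinarith [sq_nonneg ‖r i‖]
    -- bound for B
    have hBbound : ‖(inner ℂ v (Matrix.toEuclideanLin B v) : ℂ)‖ ≤ N * ‖v₁‖ ^ 2 := by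
      rw [hinnerB]
      calc ‖(inner ℂ v₁ (Matrix.toEuclideanLin B v₁) : ℂ)‖
          ≤ ‖v₁‖ * ‖Matrix.toEuclideanLin B v₁‖ := norm_inner_le_norm _ _
        _ ≤ ‖v₁‖ * (N * ‖v₁‖) := by
            refine mul_le_mul_of_nonneg_left ?_ (norm_nonneg _)
            have : Matrix.toEuclideanLin B v₁ = Matrix.toEuclideanCLM (𝕜 := ℂ) B v₁ := by
              rw [← Matrix.coe_toEuclideanCLM_eq_toEuclideanLin]; rfl
            rw [this, hN]
            exact (Matrix.toEuclideanCLM (𝕜 := ℂ) B).le_opNorm v₁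
        _ = N * ‖v₁‖ ^ 2 := by ring
    calc ‖(inner ℂ v (Matrix.toEuclideanLin B v) : ℂ)‖ ≤ N * ‖v₁‖ ^ 2 := hBbound
      _ = c * (lam1 * ‖v₁‖ ^ 2) := by rw [hc]; field_simp
      _ ≤ c * (inner ℂ v (Matrix.toEuclideanLin A v) : ℂ).re := by
          refine mul_le_mul_of_nonneg_left hlower ?_
          exact div_nonneg (norm_nonneg _) hl0.le
  -- reformulate in terms of dot products
  have hdot : ∀ (M : Matrix (Fin n) (Fin n) ℂ) (x : Fin n → ℂ),
      star x ⬝ᵥ M *ᵥ x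
        = inner ℂ ((WithLp.equiv 2 (Fin n → ℂ)).symm x)
            (Matrix.toEuclideanLin M ((WithLp.equiv 2 (Fin n → ℂ)).symm x)) := by
    intro M x
    rw [dotProduct_comm]; rfl
  have himA : ∀ x : Fin n → ℂ, (star x ⬝ᵥ A *ᵥ x).im = 0 := by
    intro x
    rw [hdot]
    set w := (WithLp.equiv 2 (Fin n → ℂ)).symm x
    have h2 : starRingEnd ℂ (inner ℂ w (Matrix.toEuclideanLin A w) : ℂ)
        = inner ℂ w (Matrix.toEuclideanLin A w) :=
      (inner_conj_symm (Matrix.toEuclideanLin A w) w).trans (hAsym w w)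
    exact Complex.conj_eq_iff_im.mp h2
  have himB : ∀ x : Fin n → ℂ, (star x ⬝ᵥ B *ᵥ x).im = 0 := by
    intro x
    rw [hdot]
    set w := (WithLp.equiv 2 (Fin n → ℂ)).symm x
    have h2 : starRingEnd ℂ (inner ℂ w (Matrix.toEuclideanLin B w) : ℂ)
        = inner ℂ w (Matrix.toEuclideanLin B w) :=
      (inner_conj_symm (Matrix.toEuclideanLin B w) w).trans (hBsym w w)
    exact Complex.conj_eq_iff_im.mp h2
  have hkey' : ∀ x : Fin n → ℂ,
      ‖star x ⬝ᵥ B *ᵥ x‖ ≤ c * (star x ⬝ᵥ A *ᵥ x).re := by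
    intro x
    rw [hdot, hdot]
    exact key _
  have hherm : ((c : ℂ) • A).IsHermitian := by
    unfold Matrix.IsHermitian
    rw [Matrix.conjTranspose_smul, hA.1]
    congr 1
    simp [Complex.conj_ofReal]
  constructor
  · refine .of_dotProduct_mulVec_nonneg (hB.add hherm) fun x => ?_
    have hexp : star x ⬝ᵥ (B + (c : ℂ) • A) *ᵥ x
        = star x ⬝ᵥ B *ᵥ x + (c : ℂ) * (star x ⬝ᵥ A *ᵥ x) := by
      rw [Matrix.add_mulVec, dotProduct_add, Matrix.smul_mulVec,
        dotProduct_smul, smul_eq_mul]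
    rw [hexp, Complex.le_def]
    constructor
    · simp only [Complex.zero_re, Complex.add_re, Complex.mul_re, Complex.ofReal_re,
        Complex.ofReal_im, himA x, zero_mul, mul_zero, sub_zero]
      have h1 := hkey' x
      have h2 : -(star x ⬝ᵥ B *ᵥ x).re ≤ ‖star x ⬝ᵥ B *ᵥ x‖ := by
        rw [← norm_neg]
        exact (Complex.neg_re _) ▸ Complex.re_le_norm _
      linarith
    · simp [Complex.add_im, Complex.mul_im, himA x, himB x, Complex.ofReal_im]
  · refine .of_dotProduct_mulVec_nonneg (hherm.sub hB) fun x => ?_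
    have hexp : star x ⬝ᵥ ((c : ℂ) • A - B) *ᵥ x
        = (c : ℂ) * (star x ⬝ᵥ A *ᵥ x) - star x ⬝ᵥ B *ᵥ x := by
      rw [Matrix.sub_mulVec, dotProduct_sub, Matrix.smul_mulVec,
        dotProduct_smul, smul_eq_mul]
    rw [hexp, Complex.le_def]
    constructor
    · simp only [Complex.zero_re, Complex.sub_re, Complex.mul_re, Complex.ofReal_re,
        Complex.ofReal_im, himA x, zero_mul, mul_zero, sub_zero]
      have h1 := hkey' x
      have h2 : (star x ⬝ᵥ B *ᵥ x).re ≤ ‖star x ⬝ᵥ B *ᵥ x‖ := Complex.re_le_norm _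
      linarith
    · simp [Complex.sub_im, Complex.mul_im, himA x, himB x, Complex.ofReal_im]
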